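/- Let P = conv(S) ⊆ ℝ^n for a nonempty finite set S, and suppose every edge of P is parallel to e_i - e_j for some i ≠ j. Then the coordinate sum functional is constant on P: there exists t ∈ ℝ such that ∑_{i=1}^n x_i = t for all x ∈ P. In particular every generalized permutohedron lies in a hyperplane {x : ∑_i x_i = t}. -/

import Mathlib

open Set

variable {n : ℕ}

lemma face_le {S : Finset (Fin n → ℝ)} (g : (Fin n → ℝ) →L[ℝ] ℝ) {M : ℝ}
    (hM : ∀ s ∈ S, g s ≤ M) {x} (hx : x ∈ convexHull ℝ (S : Set (Fin n → ℝ))) : g x ≤ M :=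
  convexHull_min (fun s hs => hM s hs) (convex_halfSpace_le ⟨g.map_add, g.map_smul⟩ M) hx

lemma face_mem_filter {S : Finset (Fin n → ℝ)} (g : (Fin n → ℝ) →L[ℝ] ℝ) {M : ℝ}
    (hM : ∀ s ∈ S, g s ≤ M) {x} (hx : x ∈ convexHull ℝ (S : Set (Fin n → ℝ)))
    (hgx : g x = M) :
    x ∈ convexHull ℝ ((S.filter (fun s => g s = M)) : Set (Fin n → ℝ)) := by
  classical
  rw [Finset.convexHull_eq] at hx
  obtain ⟨w, hw0, hw1, hcm⟩ := hx
  rw [Finset.centerMass_eq_of_sum_1 _ _ hw1] at hcm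
  have hzero : ∀ s ∈ S, w s * (M - g s) = 0 := by
    have hsum : ∑ s ∈ S, w s * (M - g s) = 0 := by
      have : g x = ∑ s ∈ S, w s * g s := by
        rw [← hcm]; simp [map_sum, map_smul, smul_eq_mul]
      have h2 : ∑ s ∈ S, w s * M = M := by
        rw [← Finset.sum_mul, hw1, one_mul]
      calc ∑ s ∈ S, w s * (M - g s) = (∑ s ∈ S, w s * M) - ∑ s ∈ S, w s * g s := by
            rw [← Finset.sum_sub_distrib]; exact Finset.sum_congr rfl (fun s _ => by ring)
        _ = M - g x := by rw [h2, this]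
        _ = 0 := by rw [hgx, sub_self]
    intro s hs
    have := (Finset.sum_eq_zero_iff_of_nonneg (fun s hs => mul_nonneg (hw0 s hs)
      (sub_nonneg.2 (hM s hs)))).1 hsum s hs
    exact this
  have hw0' : ∀ s ∈ S, w s ≠ 0 → g s = M := by
    intro s hs hws
    have := hzero s hs
    have : M - g s = 0 := by
      rcases mul_eq_zero.1 this with h | h
      · exact absurd h hws
      · exact h
    linarith
  set T := S.filter (fun s => g s = M) with hT
  have hsumT : ∑ s ∈ T, w s = 1 := by
    rw [← hw1]
    apply Finset.sum_subset (Finset.filter_subset _ _)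
    intro s hs hns
    by_contra hne
    exact hns (Finset.mem_filter.2 ⟨hs, hw0' s hs hne⟩)
  have hcmT : T.centerMass w id = x := by
    rw [Finset.centerMass_eq_of_sum_1 _ _ hsumT, ← hcm]
    apply Finset.sum_subset (Finset.filter_subset _ _)
    intro s hs hns
    have hws : w s = 0 := by
      by_contra hne
      exact hns (Finset.mem_filter.2 ⟨hs, hw0' s hs hne⟩)
    simp [hws]
  rw [Finset.convexHull_eq]
  exact ⟨w, fun s hs => hw0 s (Finset.filter_subset _ _ hs), hsumT, hcmT⟩

lemma face_isExtreme {S : Finset (Fin n → ℝ)} (g : (Fin n → ℝ) →L[ℝ] ℝ) {M : ℝ}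
    (hM : ∀ s ∈ S, g s ≤ M) :
    IsExtreme ℝ (convexHull ℝ (S : Set (Fin n → ℝ)))
      (convexHull ℝ ((S.filter (fun s => g s = M)) : Set (Fin n → ℝ))) := by
  classical
  constructor
  · exact convexHull_mono (by exact_mod_cast Finset.filter_subset _ _)
  · rintro x₁ hx₁ x₂ hx₂ x hx ⟨a, b, ha, hb, hab, habx⟩
    have hgx : g x = M := by
      have hle : g x ≤ M := face_le g hM (convexHull_mono
        (by exact_mod_cast Finset.filter_subset _ _) hx)
      have hge : M ≤ g x := by
        have : ∀ s ∈ S.filter (fun s => g s = M), (-g) s ≤ -M := by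
          intro s hs; simp [(Finset.mem_filter.1 hs).2]
        have := face_le (-g) this hx
        simpa using this
      linarith
    have h1 : g x₁ ≤ M := face_le g hM hx₁
    have h2 : g x₂ ≤ M := face_le g hM hx₂
    have hcomb : a * g x₁ + b * g x₂ = M := by
      rw [← hgx, ← habx]; simp [smul_eq_mul]
    have hMM : a * M + b * M = M := by rw [← add_mul, hab, one_mul]
    have hg1 : g x₁ = M := by
      by_contra hne
      have hlt : g x₁ < M := lt_of_le_of_ne h1 hne
      have := mul_lt_mul_of_pos_left hlt ha
      have := mul_le_mul_of_nonneg_left h2 hb.le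
      linarith
    have hg2 : g x₂ = M := by
      by_contra hne
      have hlt : g x₂ < M := lt_of_le_of_ne h2 hne
      have := mul_lt_mul_of_pos_left hlt hb
      have := mul_le_mul_of_nonneg_left h1 ha.le
      linarith
    exact face_mem_filter g hM hx₁ hg1

lemma slice_proj {S : Finset (Fin n → ℝ)} {w : Fin n → ℝ} (hw : w ∈ S)
    (h : (Fin n → ℝ) →L[ℝ] ℝ) {r : ℝ}
    (hr : ∀ q ∈ convexHull ℝ ((S.erase w : Finset (Fin n → ℝ)) : Set (Fin n → ℝ)), h q < r)
    (hrw : r < h w)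
    {x : Fin n → ℝ} (hx : x ∈ convexHull ℝ (S : Set (Fin n → ℝ))) (hxw : h x < h w) :
    w + ((h w - r) / (h w - h x)) • (x - w) ∈ convexHull ℝ (S : Set (Fin n → ℝ)) ∧
    h (w + ((h w - r) / (h w - h x)) • (x - w)) = r := by
  classical
  have hxne : (0:ℝ) < h w - h x := by linarith
  refine ⟨?_, ?_⟩
  case refine_2 =>
    have heval : h (w + ((h w - r) / (h w - h x)) • (x - w)) =
        h w + ((h w - r) / (h w - h x)) * (h x - h w) := by
      simp only [map_add, map_smul, map_sub, smul_eq_mul]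
    rw [heval]
    field_simp
    ring
  case refine_1 =>
    rcases (S.erase w).eq_empty_or_nonempty with he | hne
    · exfalso
      have hS : S = {w} := by
        apply Finset.eq_singleton_iff_unique_mem.2 ⟨hw, ?_⟩
        intro s hs
        by_contra hsw
        exact absurd (Finset.mem_erase.2 ⟨hsw, hs⟩) (by simp [he])
      rw [hS] at hx
      simp only [Finset.coe_singleton, convexHull_singleton, mem_singleton_iff] at hx
      rw [hx] at hxw
      exact lt_irrefl _ hxw
    have hcoe : (S : Set (Fin n → ℝ)) =
        insert w ((S.erase w : Finset (Fin n → ℝ)) : Set (Fin n → ℝ)) := by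
      rw [← Finset.coe_insert, Finset.insert_erase hw]
    rw [hcoe, convexHull_insert (Finset.coe_nonempty.2 hne)] at hx
    rw [mem_convexJoin] at hx
    obtain ⟨w', hw', q, hq, hxseg⟩ := hx
    rw [mem_singleton_iff] at hw'
    rw [hw'] at hxseg
    obtain ⟨a, b, ha, hb, hab, habx⟩ := hxseg
    have hqS : q ∈ convexHull ℝ (S : Set (Fin n → ℝ)) := by
      rw [hcoe, convexHull_insert (Finset.coe_nonempty.2 hne)]
      rw [mem_convexJoin]
      exact ⟨w, rfl, q, hq, right_mem_segment ℝ w q⟩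
    have hqr : h q < r := hr q hq
    have hqw : (0:ℝ) < h w - h q := by linarith
    -- h x = h w - b * (h w - h q)
    have hhx : h w - h x = b * (h w - h q) := by
      have : h x = a * h w + b * h q := by
        rw [← habx]; simp [map_add, map_smul, smul_eq_mul]
      rw [this]
      have : a = 1 - b := by linarith
      rw [this]; ring
    have hbpos : 0 < b := by
      rcases lt_or_eq_of_le hb with h' | h'
      · exact h'
      · exfalso; rw [← h'] at hhx; simp at hhx; linarith
    have hxw' : x - w = b • (q - w) := by
      have ha' : a = 1 - b := by linarith
      rw [← habx, ha']
      module
    -- the projected point equals (1-λ*) • w + λ* • q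
    set lam : ℝ := (h w - r) / (h w - h q) with hlam
    have hproj : w + ((h w - r) / (h w - h x)) • (x - w) = (1 - lam) • w + lam • q := by
      rw [hxw', smul_smul, hhx]
      have hcoef : (h w - r) / (b * (h w - h q)) * b = lam := by
        rw [hlam]; field_simp
      rw [hcoef]
      module
    rw [hproj]
    have hlam0 : 0 ≤ lam := le_of_lt (div_pos (by linarith) hqw)
    have hlam1 : lam ≤ 1 := by
      rw [hlam, div_le_one hqw]; linarith
    exact (convex_convexHull ℝ _).segment_subset (subset_convexHull ℝ _ hw) hqS
      ⟨1 - lam, lam, by linarith, hlam0, by ring, rfl⟩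

lemma edge_at_vertex {S : Finset (Fin n → ℝ)} {w : Fin n → ℝ} (hw : w ∈ S)
    (h : (Fin n → ℝ) →L[ℝ] ℝ) (hsep : ∀ s ∈ S.erase w, h s < h w)
    (hne : (S.erase w).Nonempty) :
    ∃ y, y ≠ w ∧ IsExtreme ℝ (convexHull ℝ (S : Set (Fin n → ℝ))) (segment ℝ w y) := by
  classical
  set P := convexHull ℝ (S : Set (Fin n → ℝ)) with hPdef
  have hPcvx : Convex ℝ P := convex_convexHull ℝ _
  have hPcomp : IsCompact P := S.finite_toSet.isCompact_convexHull ℝ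
  have hwP : w ∈ P := subset_convexHull ℝ _ hw
  have hhle : ∀ s ∈ S, h s ≤ h w := by
    intro s hs
    by_cases hsw : s = w
    · simp [hsw]
    · exact (hsep s (Finset.mem_erase.2 ⟨hsw, hs⟩)).le
  have hPle : ∀ x ∈ P, h x ≤ h w := fun x hx => face_le h hhle hx
  have hfilter : S.filter (fun s => h s = h w) = {w} := by
    apply Finset.eq_singleton_iff_unique_mem.2
    refine ⟨Finset.mem_filter.2 ⟨hw, rfl⟩, ?_⟩
    intro s hs
    rcases Finset.mem_filter.1 hs with ⟨hsS, hsv⟩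
    by_contra hsw
    exact absurd hsv (ne_of_lt (hsep s (Finset.mem_erase.2 ⟨hsw, hsS⟩)))
  have hPeqw : ∀ x ∈ P, h x = h w → x = w := by
    intro x hx hxv
    have := face_mem_filter h hhle hx hxv
    rw [hfilter] at this
    simpa using this
  -- choose r strictly between max over erase and h w
  obtain ⟨s₁, hs₁, hmax⟩ := (S.erase w).exists_max_image h hne
  set m' : ℝ := h s₁ with hm'
  have hm'w : m' < h w := hsep s₁ hs₁
  set r : ℝ := (m' + h w) / 2 with hrdef
  have hm'r : m' < r := by rw [hrdef]; linarith
  have hrw : r < h w := by rw [hrdef]; linarith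
  have hqr : ∀ q ∈ convexHull ℝ ((S.erase w : Finset (Fin n → ℝ)) : Set (Fin n → ℝ)), h q < r :=
    fun q hq => lt_of_le_of_lt (face_le h hmax hq) hm'r
  -- the slice C
  set C : Set (Fin n → ℝ) := P ∩ {v | h v = r} with hCdef
  have hCcomp : IsCompact C := hPcomp.inter_right (isClosed_eq h.continuous continuous_const)
  have hCne : C.Nonempty := by
    have hs₁P : s₁ ∈ P := subset_convexHull ℝ _ (Finset.mem_of_mem_erase hs₁)
    have hs₁w : h s₁ < h w := hsep s₁ hs₁
    obtain ⟨hc1, hc2⟩ := slice_proj hw h hqr hrw hs₁P hs₁w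
    exact ⟨_, hc1, hc2⟩
  obtain ⟨z, hz⟩ := hCcomp.extremePoints_nonempty hCne
  have hzC : z ∈ C := hz.1
  have hzP : z ∈ P := hzC.1
  have hzr : h z = r := hzC.2
  have hzw : z ≠ w := fun e => by rw [e] at hzr; linarith
  have hzwne : z - w ≠ 0 := sub_ne_zero.2 hzw
  -- the ray set D and its maximum T
  set D : Set ℝ := {t : ℝ | w + t • (z - w) ∈ P} with hDdef
  have hDclosed : IsClosed D := by
    have : D = (fun t : ℝ => w + t • (z - w)) ⁻¹' P := rfl
    rw [this]
    exact IsClosed.preimage (continuous_const.add (continuous_id.smul continuous_const)) hPcomp.isClosed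
  have hDbdd : Bornology.IsBounded D := by
    obtain ⟨R, hR⟩ := hPcomp.isBounded.subset_closedBall w
    apply Bornology.IsBounded.subset (Metric.isBounded_closedBall
      (x := (0:ℝ)) (r := R / ‖z - w‖))
    intro t ht
    have h1 : w + t • (z - w) ∈ Metric.closedBall w R := hR ht
    rw [Metric.mem_closedBall, dist_eq_norm] at h1 ⊢
    have h2 : ‖t • (z - w)‖ ≤ R := by simpa using h1
    rw [norm_smul] at h2
    have hnz : 0 < ‖z - w‖ := norm_pos_iff.2 hzwne
    rw [sub_zero]
    exact (le_div_iff₀ hnz).2 h2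
  have hDcomp : IsCompact D := Metric.isCompact_of_isClosed_isBounded hDclosed hDbdd
  have h1D : (1:ℝ) ∈ D := by
    show w + (1:ℝ) • (z - w) ∈ P
    simpa using hzP
  obtain ⟨T, hTD, hTub⟩ := hDcomp.exists_isGreatest ⟨1, h1D⟩
  have hTub' : ∀ t ∈ D, t ≤ T := fun t ht => hTub ht
  have hT1 : (1:ℝ) ≤ T := hTub' 1 h1D
  have hT0 : (0:ℝ) < T := by linarith
  set y : Fin n → ℝ := w + T • (z - w) with hydef
  have hyP : y ∈ P := hTD
  have hyw : y ≠ w := by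
    intro e
    have : T • (z - w) = 0 := by
      have := congrArg (fun v => v - w) e
      simpa [hydef] using this
    rcases smul_eq_zero.1 this with h' | h'
    · linarith
    · exact hzwne h'
  -- membership of ray points in the segment
  have hray : ∀ t : ℝ, 0 ≤ t → t ≤ T → w + t • (z - w) ∈ segment ℝ w y := by
    intro t ht0 htT
    refine ⟨1 - t / T, t / T, ?_, div_nonneg ht0 hT0.le, by ring, ?_⟩
    · rw [sub_nonneg, div_le_one hT0]; exact htT
    · rw [hydef]
      have : (T:ℝ) ≠ 0 := ne_of_gt hT0
      match_scalars <;> (field_simp; try ring)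
  have hrayP : ∀ (x : Fin n → ℝ), x ∈ P → ∀ t : ℝ, 0 ≤ t → x = w + t • (z - w) →
      x ∈ segment ℝ w y := by
    intro x hx t ht0 hxt
    have htD : t ∈ D := by show w + t • (z - w) ∈ P; rw [← hxt]; exact hx
    rw [hxt]; exact hray t ht0 (hTub' t htD)
  refine ⟨y, hyw, ?_, ?_⟩
  · exact hPcvx.segment_subset hwP hyP
  · rintro x₁ hx₁ x₂ hx₂ p hp ⟨a, b, ha, hb, hab, habp⟩
    -- p = w + t • (z - w) with 0 ≤ t ≤ T
    obtain ⟨a', b', ha', hb', hab', habp'⟩ := hp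
    set t : ℝ := b' * T with htdef
    have ht0 : 0 ≤ t := mul_nonneg hb' hT0.le
    have htT : t ≤ T := by
      rw [htdef]
      nlinarith
    have hpt : p = w + t • (z - w) := by
      rw [← habp', hydef, htdef]
      have ha'' : a' = 1 - b' := by linarith
      rw [ha'']
      module
    have hhp : h p = h w - t * (h w - r) := by
      rw [hpt]
      simp only [map_add, map_smul, map_sub, smul_eq_mul]
      rw [hzr]; ring
    have hhx₁ : h x₁ ≤ h w := hPle _ hx₁
    have hhx₂ : h x₂ ≤ h w := hPle _ hx₂
    have hhpcomb : a * h x₁ + b * h x₂ = h p := by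
      rw [← habp]; simp [map_add, map_smul, smul_eq_mul]
    rcases eq_or_lt_of_le ht0 with ht0' | htpos
    · -- t = 0 : p = w
      have hpw : p = w := by rw [hpt, ← ht0']; simp
      have hhw : h p = h w := by rw [hpw]
      have hMM : a * h w + b * h w = h w := by rw [← add_mul, hab, one_mul]
      have hg1 : h x₁ = h w := by
        by_contra hne'
        have hlt : h x₁ < h w := lt_of_le_of_ne hhx₁ hne'
        have := mul_lt_mul_of_pos_left hlt ha
        have := mul_le_mul_of_nonneg_left hhx₂ hb.le
        linarith
      have hg2 : h x₂ = h w := by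
        by_contra hne'
        have hlt : h x₂ < h w := lt_of_le_of_ne hhx₂ hne'
        have := mul_lt_mul_of_pos_left hlt hb
        have := mul_le_mul_of_nonneg_left hhx₁ ha.le
        linarith
      have e1 : x₁ = w := hPeqw _ hx₁ hg1
      have e2 : x₂ = w := hPeqw _ hx₂ hg2
      rw [e1]
      exact left_mem_segment ℝ w y
    · -- t > 0
      by_cases hx1w : x₁ = w
      · -- x₂ = w + (t/b) • (z - w)
        have hb0 : b ≠ 0 := ne_of_gt hb
        have hx2eq : x₂ = w + (t / b) • (z - w) := by
          have h1 : b • x₂ = w + t • (z - w) - a • w := by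
            rw [← hpt, ← habp, hx1w]; module
          have h2 : x₂ = b⁻¹ • (b • x₂) := by
            rw [smul_smul, inv_mul_cancel₀ hb0, one_smul]
          rw [h2, h1]
          have ha'' : a = 1 - b := by linarith
          rw [ha'']
          match_scalars <;> (field_simp; try ring)
        exact hx1w ▸ left_mem_segment ℝ w y
      by_cases hx2w : x₂ = w
      · have ha0 : a ≠ 0 := ne_of_gt ha
        have hx1eq : x₁ = w + (t / a) • (z - w) := by
          have h1 : a • x₁ = w + t • (z - w) - b • w := by
            rw [← hpt, ← habp, hx2w]; module
          have h2 : x₁ = a⁻¹ • (a • x₁) := by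
            rw [smul_smul, inv_mul_cancel₀ ha0, one_smul]
          rw [h2, h1]
          have hb'' : b = 1 - a := by linarith
          rw [hb'']
          match_scalars <;> (field_simp; try ring)
        exact hrayP x₁ hx₁ (t / a) (div_nonneg ht0 ha.le) hx1eq
      -- main case: both differ from w
      have hα₁ : h x₁ < h w := lt_of_le_of_ne hhx₁ (fun e => hx1w (hPeqw _ hx₁ e))
      have hα₂ : h x₂ < h w := lt_of_le_of_ne hhx₂ (fun e => hx2w (hPeqw _ hx₂ e))
      set α₁ : ℝ := h w - h x₁ with hα₁def
      set α₂ : ℝ := h w - h x₂ with hα₂def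
      have hα₁0 : 0 < α₁ := by rw [hα₁def]; linarith
      have hα₂0 : 0 < α₂ := by rw [hα₂def]; linarith
      set ψ₁ : Fin n → ℝ := w + ((h w - r) / α₁) • (x₁ - w) with hψ₁def
      set ψ₂ : Fin n → ℝ := w + ((h w - r) / α₂) • (x₂ - w) with hψ₂def
      obtain ⟨hψ₁P, hψ₁r⟩ := slice_proj hw h hqr hrw hx₁ hα₁
      obtain ⟨hψ₂P, hψ₂r⟩ := slice_proj hw h hqr hrw hx₂ hα₂
      have hψ₁C : ψ₁ ∈ C := ⟨hψ₁P, hψ₁r⟩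
      have hψ₂C : ψ₂ ∈ C := ⟨hψ₂P, hψ₂r⟩
      -- scalar relation
      have hrel : a * α₁ + b * α₂ = t * (h w - r) := by
        rw [hα₁def, hα₂def]
        have := hhpcomb
        rw [hhp] at this
        linear_combination h w * hab - this
      set β : ℝ := t * (h w - r) with hβdef
      have hβ0 : 0 < β := mul_pos htpos (by linarith)
      -- z in open segment of ψ₁ ψ₂
      have hkey : (a * α₁) • ψ₁ + (b * α₂) • ψ₂ = β • z := by
        rw [hψ₁def, hψ₂def, hβdef]
        have hcomb : a • x₁ + b • x₂ = w + t • (z - w) := by rw [habp, hpt]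
        have e1 : (a * α₁) • (w + ((h w - r) / α₁) • (x₁ - w)) =
            (a * α₁) • w + (a * (h w - r)) • (x₁ - w) := by
          rw [smul_add, smul_smul]
          congr 2
          field_simp
        have e2 : (b * α₂) • (w + ((h w - r) / α₂) • (x₂ - w)) =
            (b * α₂) • w + (b * (h w - r)) • (x₂ - w) := by
          rw [smul_add, smul_smul]
          congr 2
          field_simp
        rw [e1, e2]
        have e3 : (a * (h w - r)) • (x₁ - w) + (b * (h w - r)) • (x₂ - w) =
            (h w - r) • ((a • x₁ + b • x₂) - (a + b) • w) := by
          module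
        have e4 : (a * α₁) • w + (a * (h w - r)) • (x₁ - w) +
            ((b * α₂) • w + (b * (h w - r)) • (x₂ - w)) =
            (a * α₁ + b * α₂) • w +
            ((a * (h w - r)) • (x₁ - w) + (b * (h w - r)) • (x₂ - w)) := by
          module
        rw [e4, e3, hcomb, hab, hrel]
        module
      clear_value ψ₁ ψ₂
      have hzopen : z ∈ openSegment ℝ ψ₁ ψ₂ := by
        refine ⟨a * α₁ / β, b * α₂ / β, div_pos (mul_pos ha hα₁0) hβ0,
          div_pos (mul_pos hb hα₂0) hβ0, ?_, ?_⟩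
        · rw [← add_div, hrel, div_self (ne_of_gt hβ0)]
        · have heq : (a * α₁ / β) • ψ₁ + (b * α₂ / β) • ψ₂ =
              β⁻¹ • ((a * α₁) • ψ₁ + (b * α₂) • ψ₂) := by
            rw [smul_add, smul_smul, smul_smul]
            congr 1 <;> · congr 1; ring
          rw [heq, hkey, smul_smul, inv_mul_cancel₀ (ne_of_gt hβ0), one_smul]
      obtain ⟨hψ₁z, hψ₂z⟩ := (mem_extremePoints.1 hz).2 _ hψ₁C _ hψ₂C hzopen
      -- recover x₁, x₂ on the ray
      have hback : ∀ (x : Fin n → ℝ) (α : ℝ), 0 < α →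
          w + ((h w - r) / α) • (x - w) = z → x = w + (α / (h w - r)) • (z - w) := by
        intro x α hα0 hxz
        have hc0 : (h w - r) / α ≠ 0 := ne_of_gt (div_pos (by linarith) hα0)
        have h1 : ((h w - r) / α) • (x - w) = z - w := by
          rw [← hxz]; abel
        have h2 : x - w = ((h w - r) / α)⁻¹ • (z - w) := by
          rw [← h1, smul_smul, inv_mul_cancel₀ hc0, one_smul]
        have h3 : ((h w - r) / α)⁻¹ = α / (h w - r) := by
          rw [inv_div]
        rw [← h3]
        rw [← h2]
        abel
      rw [hψ₁def] at hψ₁z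
      rw [hψ₂def] at hψ₂z
      have hx1back := hback x₁ α₁ hα₁0 hψ₁z
      have hx2back := hback x₂ α₂ hα₂0 hψ₂z
      exact hrayP x₁ hx₁ (α₁ / (h w - r)) (le_of_lt (div_pos hα₁0 (by linarith))) hx1back

lemma exists_nonconstant_edge (f : (Fin n → ℝ) →L[ℝ] ℝ) (S : Finset (Fin n → ℝ))
    (hnc : ∃ a ∈ convexHull ℝ (S : Set (Fin n → ℝ)),
      ∃ b ∈ convexHull ℝ (S : Set (Fin n → ℝ)), f a ≠ f b) :
    ∃ x y, x ≠ y ∧ IsExtreme ℝ (convexHull ℝ (S : Set (Fin n → ℝ))) (segment ℝ x y) ∧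
      f x ≠ f y := by
  classical
  induction S using Finset.strongInduction with
  | _ S ih =>
  obtain ⟨p, hp, q, hq, hpq⟩ := hnc
  -- Case 1: a redundant point can be erased
  by_cases hred : ∃ s ∈ S, s ∈ convexHull ℝ ((S.erase s : Finset (Fin n → ℝ)) : Set (Fin n → ℝ))
  · obtain ⟨s, hsS, hs⟩ := hred
    have hPeq : convexHull ℝ (S : Set (Fin n → ℝ)) =
        convexHull ℝ ((S.erase s : Finset (Fin n → ℝ)) : Set (Fin n → ℝ)) := by
      apply le_antisymm
      · apply convexHull_min _ (convex_convexHull ℝ _)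
        intro x hx
        rcases eq_or_ne x s with rfl | hxs
        · exact hs
        · exact subset_convexHull ℝ _ (Finset.mem_erase.2 ⟨hxs, hx⟩)
      · exact convexHull_mono (by exact_mod_cast Finset.erase_subset s S)
    rw [hPeq] at hp hq ⊢
    exact ih (S.erase s) (Finset.erase_ssubset hsS) ⟨p, hp, q, hq, hpq⟩
  push_neg at hred
  -- f is nonconstant on S
  have hSne : S.Nonempty := by
    rcases S.eq_empty_or_nonempty with rfl | h'
    · simp at hp
    · exact h'
  have hncS : ∃ u ∈ S, ∃ v ∈ S, f v < f u := by
    by_contra hcon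
    push_neg at hcon
    obtain ⟨s₀, hs₀⟩ := hSne
    have hconst : ∀ x ∈ convexHull ℝ (S : Set (Fin n → ℝ)), f x = f s₀ := by
      intro x hx
      have h1 : f x ≤ f s₀ := by
        apply face_le f (fun s hs => ?_) hx
        by_contra hlt
        push_neg at hlt
        exact absurd hlt (not_lt.2 (hcon s hs s₀ hs₀))
      have h2 : (-f) x ≤ (-f) s₀ := by
        apply face_le (-f) (fun s hs => ?_) hx
        simp only [ContinuousLinearMap.neg_apply, neg_le_neg_iff]
        by_contra hlt
        push_neg at hlt
        exact absurd hlt (not_lt.2 (hcon s₀ hs₀ s hs))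
      simp only [ContinuousLinearMap.neg_apply, neg_le_neg_iff] at h2
      linarith
    exact hpq (by rw [hconst p hp, hconst q hq])
  -- w : minimizer of f on S ; u : a point with larger f value
  obtain ⟨w, hwS, hwmin⟩ := S.exists_min_image f hSne
  obtain ⟨u, huS, v, hvS, huv⟩ := hncS
  have hwu : f w < f u := lt_of_le_of_lt (hwmin v hvS) huv
  have huw : u ≠ w := fun e => by rw [e] at hwu; exact lt_irrefl _ hwu
  have huerase : u ∈ S.erase w := Finset.mem_erase.2 ⟨huw, huS⟩
  have herasene : (S.erase w).Nonempty := ⟨u, huerase⟩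
  -- separate w from conv(S.erase w)
  have hwnotin : w ∉ convexHull ℝ ((S.erase w : Finset (Fin n → ℝ)) : Set (Fin n → ℝ)) :=
    hred w hwS
  obtain ⟨h, u₀, hu₀, hwu₀⟩ := geometric_hahn_banach_closed_point
    (convex_convexHull ℝ _) ((S.erase w).finite_toSet.isCompact_convexHull ℝ).isClosed hwnotin
  have hsep : ∀ s ∈ S.erase w, h s < h w := fun s hs =>
    lt_trans (hu₀ s (subset_convexHull ℝ _ hs)) hwu₀
  -- the pivot threshold
  obtain ⟨s₀, hs₀, hs₀max⟩ := (S.erase w).exists_max_image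
    (fun s => (f s - f w) / (h w - h s)) herasene
  set tst : ℝ := (f s₀ - f w) / (h w - h s₀) with htst
  have hden : ∀ s ∈ S.erase w, 0 < h w - h s := fun s hs => by
    have := hsep s hs; linarith
  have htstpos : 0 < tst := by
    have h1 : (0:ℝ) < (f u - f w) / (h w - h u) :=
      div_pos (by linarith) (hden u huerase)
    exact lt_of_lt_of_le h1 (hs₀max u huerase)
  set g : (Fin n → ℝ) →L[ℝ] ℝ := f + tst • h with hgdef
  have hgs : ∀ s ∈ S, g s ≤ g w := by
    intro s hs
    rcases eq_or_ne s w with rfl | hsw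
    · exact le_refl _
    · have hse : s ∈ S.erase w := Finset.mem_erase.2 ⟨hsw, hs⟩
      have h1 : (f s - f w) / (h w - h s) ≤ tst := hs₀max s hse
      have h2 : f s - f w ≤ tst * (h w - h s) := by
        rw [div_le_iff₀ (hden s hse)] at h1
        linarith
      simp only [hgdef, ContinuousLinearMap.add_apply, ContinuousLinearMap.smul_apply,
        smul_eq_mul]
      linarith
  have hgs₀ : g s₀ = g w := by
    have h2 : f s₀ - f w = tst * (h w - h s₀) := by
      rw [htst, div_mul_cancel₀ _ (ne_of_gt (hden s₀ hs₀))]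
    simp only [hgdef, ContinuousLinearMap.add_apply, ContinuousLinearMap.smul_apply,
      smul_eq_mul]
    linarith
  have hfs₀ : f w < f s₀ := by
    have h2 : f s₀ - f w = tst * (h w - h s₀) := by
      rw [htst, div_mul_cancel₀ _ (ne_of_gt (hden s₀ hs₀))]
    nlinarith [hden s₀ hs₀, htstpos]
  by_cases hdeg : ∀ s ∈ S, g s = g w
  · -- degenerate: w is the unique minimizer of f on S
    have hfw : ∀ s ∈ S, s ≠ w → f w < f s := by
      intro s hs hsw
      have hse : s ∈ S.erase w := Finset.mem_erase.2 ⟨hsw, hs⟩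
      have h1 : g s = g w := hdeg s hs
      simp only [hgdef, ContinuousLinearMap.add_apply, ContinuousLinearMap.smul_apply,
        smul_eq_mul] at h1
      nlinarith [hden s hse, htstpos]
    have hfle : ∀ s ∈ S, (-f) s ≤ (-f) w := by
      intro s hs
      simp only [ContinuousLinearMap.neg_apply, neg_le_neg_iff]
      exact hwmin s hs
    have hfilter : S.filter (fun s => (-f) s = (-f) w) = {w} := by
      apply Finset.eq_singleton_iff_unique_mem.2
      refine ⟨Finset.mem_filter.2 ⟨hwS, rfl⟩, ?_⟩
      intro s hs
      rcases Finset.mem_filter.1 hs with ⟨hsS, hsv⟩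
      by_contra hsw
      simp only [ContinuousLinearMap.neg_apply, neg_inj] at hsv
      exact absurd hsv.symm (ne_of_lt (hfw s hsS hsw))
    have hPeqw : ∀ x ∈ convexHull ℝ (S : Set (Fin n → ℝ)), f x = f w → x = w := by
      intro x hx hxv
      have : (-f) x = (-f) w := by
        simp only [ContinuousLinearMap.neg_apply, neg_inj]; exact hxv
      have := face_mem_filter (-f) hfle hx this
      rw [hfilter] at this
      simpa using this
    obtain ⟨y, hyw, hedge⟩ := edge_at_vertex hwS h hsep herasene
    refine ⟨w, y, fun e => hyw e.symm, hedge, ?_⟩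
    intro hfy
    have hyP : y ∈ convexHull ℝ (S : Set (Fin n → ℝ)) :=
      hedge.1 (right_mem_segment ℝ w y)
    exact hyw (hPeqw y hyP hfy.symm)
  · -- nondegenerate: recurse into the proper face
    push_neg at hdeg
    obtain ⟨s₁, hs₁S, hs₁⟩ := hdeg
    set S' : Finset (Fin n → ℝ) := S.filter (fun s => g s = g w) with hS'def
    have hS'sub : S' ⊂ S := by
      refine Finset.ssubset_iff_of_subset (Finset.filter_subset _ _) |>.2 ⟨s₁, hs₁S, ?_⟩
      intro hmem
      exact hs₁ (Finset.mem_filter.1 hmem).2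
    have hwS' : w ∈ S' := Finset.mem_filter.2 ⟨hwS, rfl⟩
    have hs₀S' : s₀ ∈ S' := Finset.mem_filter.2 ⟨Finset.mem_of_mem_erase hs₀, hgs₀⟩
    have hnc' : ∃ a ∈ convexHull ℝ (S' : Set (Fin n → ℝ)),
        ∃ b ∈ convexHull ℝ (S' : Set (Fin n → ℝ)), f a ≠ f b :=
      ⟨w, subset_convexHull ℝ _ hwS', s₀, subset_convexHull ℝ _ hs₀S',
        fun e => absurd e (ne_of_lt hfs₀)⟩
    obtain ⟨x, y, hxy, hedge', hfxy⟩ := ih S' hS'sub hnc'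
    exact ⟨x, y, hxy, (face_isExtreme g hgs).trans hedge', hfxy⟩

/-- If every edge of the polytope `P = conv(S)` is parallel to some
`e_i - e_j` with `i ≠ j`, then the coordinate sum functional is constant on `P`: there is
`t ∈ ℝ` with `∑ᵢ xᵢ = t` for all `x ∈ P`. -/
theorem generalized_permutohedron_lies_in_hyperplane
    (n : ℕ) (S : Finset (Fin n → ℝ)) (hS : S.Nonempty)
    (P : Set (Fin n → ℝ)) (hP : P = convexHull ℝ (S : Set (Fin n → ℝ)))
    (hedge : ∀ x y : Fin n → ℝ, x ≠ y → IsExtreme ℝ P (segment ℝ x y) →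
      ∃ i j : Fin n, i ≠ j ∧ ∃ c : ℝ,
        y - x = c • ((Pi.single i 1 : Fin n → ℝ) - Pi.single j 1)) :
    ∃ t : ℝ, ∀ x ∈ P, ∑ i, x i = t := by
  classical
  set φ : (Fin n → ℝ) →L[ℝ] ℝ :=
    LinearMap.toContinuousLinearMap (∑ i : Fin n, LinearMap.proj i) with hφdef
  have hφeval : ∀ x : Fin n → ℝ, φ x = ∑ i, x i := by
    intro x
    simp [hφdef, LinearMap.toContinuousLinearMap]
  have hφsingle : ∀ i : Fin n, φ (Pi.single i 1) = 1 := by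
    intro i
    rw [hφeval]
    simp [Finset.sum_pi_single']
  by_cases hc : ∃ a ∈ P, ∃ b ∈ P, φ a ≠ φ b
  · exfalso
    rw [hP] at hc
    obtain ⟨x, y, hxy, hext, hfxy⟩ := exists_nonconstant_edge φ S hc
    obtain ⟨i, j, hij, c, hdir⟩ := hedge x y hxy (hP ▸ hext)
    apply hfxy
    have h1 : φ y - φ x = φ (y - x) := by rw [map_sub]
    have h2 : φ (y - x) = 0 := by
      rw [hdir, map_smul, map_sub, hφsingle i, hφsingle j]
      simp
    have : φ y - φ x = 0 := by rw [h1, h2]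
    linarith
  · push_neg at hc
    obtain ⟨s₀, hs₀⟩ := hS
    have hs₀P : s₀ ∈ P := hP ▸ subset_convexHull ℝ _ hs₀
    refine ⟨φ s₀, fun x hx => ?_⟩
    rw [← hφeval]
    exact hc x hx s₀ hs₀P
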